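/- If $G$ is a connected graph and the total number of cut vertices and cut edges of $G$ is $t$, then $trc(G) \geq t$. -/

import Mathlib

open SimpleGraph

/-- A total coloring (edge colors `cE`, vertex colors `cV`) makes `G`
total-rainbow connected if any two distinct vertices are joined by a path
whose edges and internal vertices receive pairwise distinct colors. -/
def IsTRCColoring {V : Type*} (G : SimpleGraph V) {k : ℕ}
    (cE : Sym2 V → Fin k) (cV : V → Fin k) : Prop :=
  ∀ u v : V, u ≠ v → ∃ p : G.Walk u v, p.IsPath ∧
    (p.edges.map cE ++ p.support.tail.dropLast.map cV).Nodup

/-- The total-rainbow connection number of `G`. -/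
noncomputable def trc {V : Type*} (G : SimpleGraph V) : ℕ :=
  sInf {k | ∃ (cE : Sym2 V → Fin k) (cV : V → Fin k), IsTRCColoring G cE cV}

/-- `v` is a cut vertex of `G`: removing it disconnects the graph. -/
def IsCutVertex {V : Type*} (G : SimpleGraph V) (v : V) : Prop :=
  G.Connected ∧ ¬ (G.induce ({v}ᶜ : Set V)).Connected

section Helpers
variable {V : Type*} {G : SimpleGraph V}

/-- Reachability avoiding a vertex. -/
def Avoid (G : SimpleGraph V) (u s t : V) : Prop := ∃ p : G.Walk s t, u ∉ p.support

/-- Reachability avoiding an edge. -/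
def AvoidE (G : SimpleGraph V) (e : Sym2 V) (s t : V) : Prop := ∃ p : G.Walk s t, e ∉ p.edges

lemma avoid_refl {u s : V} (h : s ≠ u) : Avoid G u s s := ⟨Walk.nil, by simp [h.symm]⟩

lemma Avoid.symm {u s t : V} : Avoid G u s t → Avoid G u t s := by
  rintro ⟨p, hp⟩; exact ⟨p.reverse, by simpa [Walk.support_reverse] using hp⟩

lemma Avoid.trans {u s t r : V} : Avoid G u s t → Avoid G u t r → Avoid G u s r := by
  rintro ⟨p, hp⟩ ⟨q, hq⟩
  exact ⟨p.append q, by simp [Walk.mem_support_append_iff, hp, hq]⟩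

lemma avoidE_refl {e : Sym2 V} {s : V} : AvoidE G e s s := ⟨Walk.nil, by simp⟩

lemma AvoidE.symm {e : Sym2 V} {s t : V} : AvoidE G e s t → AvoidE G e t s := by
  rintro ⟨p, hp⟩; exact ⟨p.reverse, by simpa [Walk.edges_reverse] using hp⟩

lemma AvoidE.trans {e : Sym2 V} {s t r : V} : AvoidE G e s t → AvoidE G e t r → AvoidE G e s r := by
  rintro ⟨p, hp⟩ ⟨q, hq⟩
  exact ⟨p.append q, by simp [Walk.edges_append, hp, hq]⟩

variable [DecidableEq V]

lemma end_not_mem_takeUntil {s t c : V} (p : G.Walk s t) (hp : p.IsPath)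
    (hc : c ∈ p.support) (hct : c ≠ t) : t ∉ (p.takeUntil c hc).support := by
  have hspec := p.take_spec hc
  have hnodup : p.support.Nodup := hp.support_nodup
  rw [← hspec, Walk.support_append] at hnodup
  have ht : t ∈ (p.dropUntil c hc).support.tail := by
    have h1 : t ∈ (p.dropUntil c hc).support := Walk.end_mem_support _
    rw [Walk.support_eq_cons, List.mem_cons] at h1
    rcases h1 with h2 | h2
    · exact absurd h2.symm hct
    · exact h2
  exact fun h => (List.disjoint_of_nodup_append hnodup) h ht

/-- From a path `s → t` through `c ≠ t`, get a walk `s → c` avoiding `t`. -/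
lemma avoid_of_path_through {s t c : V} (p : G.Walk s t) (hp : p.IsPath)
    (hc : c ∈ p.support) (hct : c ≠ t) : Avoid G t s c :=
  ⟨p.takeUntil c hc, end_not_mem_takeUntil p hp hc hct⟩

/-- Edge version: edges containing `t` don't occur on `takeUntil`. -/
lemma avoidE_of_path_through {s t c a : V} (p : G.Walk s t) (hp : p.IsPath)
    (hc : c ∈ p.support) (hct : c ≠ t) : AvoidE G s(a, t) s c := by
  refine ⟨p.takeUntil c hc, fun he => ?_⟩
  exact end_not_mem_takeUntil p hp hc hct (Walk.snd_mem_support_of_mem_edges _ he)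

lemma IsCutVertex_exists_sep {u : V}
    (hu : ¬ (G.induce ({u}ᶜ : Set V)).Connected) (hne : ∃ w : V, w ≠ u) :
    ∃ s t : V, s ≠ u ∧ t ≠ u ∧ ¬ Avoid G u s t := by
  by_contra hcon
  push_neg at hcon
  apply hu
  obtain ⟨w, hw⟩ := hne
  have hw' : w ∈ ({u}ᶜ : Set V) := by simp [hw]
  apply induce_connected_of_patches w hw'
  intro v hv
  have hv' : v ≠ u := by simpa using hv
  obtain ⟨p, hp⟩ := hcon w v hw hv'
  refine ⟨{x | x ∈ p.support}, fun x hx => ?_, p.start_mem_support, p.end_mem_support, ?_⟩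
  · simp only [Set.mem_compl_iff, Set.mem_singleton_iff]
    rintro rfl; exact hp hx
  · exact p.connected_induce_support.preconnected _ _

lemma IsBridge_not_avoidE {a b : V} (h : G.IsBridge s(a, b)) : ¬ AvoidE G s(a, b) a b := by
  rw [isBridge_iff_adj_and_forall_walk_mem_edges] at h
  rintro ⟨p, hp⟩
  exact hp (h p)

/-- Choice step: from a separated pair pick one separated from `v`. -/
lemma choose_sep {u a b v : V} (h : ¬ Avoid G u a b) (ha : a ≠ u) (hb : b ≠ u) (hv : v ≠ u) :
    ∃ s, s ≠ u ∧ s ≠ v ∧ ¬ Avoid G u s v := by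
  have hab : a ≠ b := by
    rintro rfl; exact h ⟨Walk.nil, by simp [ha.symm]⟩
  by_cases hva : v = a
  · subst hva
    exact ⟨b, hb, Ne.symm hab, fun h' => h (Avoid.symm h')⟩
  by_cases hvb : v = b
  · subst hvb
    exact ⟨a, ha, fun h' => hva h'.symm, h⟩
  by_cases hav : Avoid G u a v
  · refine ⟨b, hb, fun h' => hvb h'.symm, fun hbv => ?_⟩
    exact h (Avoid.trans hav (Avoid.symm hbv))
  · exact ⟨a, ha, fun h' => hva h'.symm, hav⟩

/-- Choice step for edges. -/
lemma choose_sepE {f : Sym2 V} {a b y : V} (h : ¬ AvoidE G f a b) :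
    ∃ t, t ≠ y ∧ (t = a ∨ t = b) ∧ ¬ AvoidE G f y t := by
  by_cases hya : AvoidE G f y a
  · refine ⟨b, ?_, Or.inr rfl, fun hyb => h (AvoidE.trans (AvoidE.symm hya) hyb)⟩
    rintro rfl; exact h (AvoidE.symm hya)
  · refine ⟨a, ?_, Or.inl rfl, hya⟩
    rintro rfl; exact hya avoidE_refl

lemma avoidE_classify (hconn : G.Connected) {a b : V} (hab : G.Adj a b) (c : V) :
    AvoidE G s(a, b) c a ∨ AvoidE G s(a, b) c b := by
  obtain ⟨q0⟩ := hconn c a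
  obtain ⟨q, hq⟩ : ∃ q : G.Walk c a, q.IsPath := ⟨q0.toPath.1, q0.toPath.2⟩
  by_cases hmem : s(a, b) ∈ q.edges
  · right
    have hbs : b ∈ q.support := Walk.snd_mem_support_of_mem_edges _ hmem
    have := avoidE_of_path_through (a := b) q hq hbs hab.ne'
    rwa [Sym2.eq_swap] at this
  · left; exact ⟨q, hmem⟩

lemma sepE_aux {e f : Sym2 V} {x y a b : V} (he : ¬ AvoidE G e x y) (hf : ¬ AvoidE G f a b)
    (heab : AvoidE G e a b) (hax : AvoidE G e a x) :
    ∃ t : V, y ≠ t ∧ ¬ AvoidE G e y t ∧ ¬ AvoidE G f y t := by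
  obtain ⟨t, hty, htab, ht⟩ := choose_sepE (y := y) hf
  have hetx : AvoidE G e t x := by
    rcases htab with rfl | rfl
    · exact hax
    · exact AvoidE.trans (AvoidE.symm heab) hax
  exact ⟨t, hty.symm, fun hyt => he (AvoidE.symm (AvoidE.trans hyt hetx)), ht⟩

lemma sepEE (hconn : G.Connected) {x y a b : V} (hxy : G.Adj x y) (hab : G.Adj a b)
    (hef : s(x, y) ≠ s(a, b)) (hbe : ¬ AvoidE G s(x, y) x y) (hbf : ¬ AvoidE G s(a, b) a b) :
    ∃ s t : V, s ≠ t ∧ ∀ p : G.Walk s t, s(x, y) ∈ p.edges ∧ s(a, b) ∈ p.edges := by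
  have heab : AvoidE G s(x, y) a b := ⟨Walk.cons hab Walk.nil, by simp [hef]⟩
  rcases avoidE_classify hconn hxy a with hax | hay
  · obtain ⟨t, hyt, h1, h2⟩ := sepE_aux hbe hbf heab hax
    refine ⟨y, t, hyt, fun p => ⟨?_, ?_⟩⟩
    · by_contra h; exact h1 ⟨p, h⟩
    · by_contra h; exact h2 ⟨p, h⟩
  · obtain ⟨t, hxt, h1, h2⟩ := sepE_aux (fun h => hbe (AvoidE.symm h)) hbf heab hay
    refine ⟨x, t, hxt, fun p => ⟨?_, ?_⟩⟩
    · by_contra h; exact h1 ⟨p, h⟩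
    · by_contra h; exact h2 ⟨p, h⟩

lemma sepVV (hconn : G.Connected) {u v : V} (hu : ¬ (G.induce ({u}ᶜ : Set V)).Connected)
    (hv : ¬ (G.induce ({v}ᶜ : Set V)).Connected) (huv : u ≠ v) :
    ∃ s t : V, s ≠ t ∧ s ≠ u ∧ s ≠ v ∧ t ≠ u ∧ t ≠ v ∧
      ∀ p : G.Walk s t, u ∈ p.support ∧ v ∈ p.support := by
  obtain ⟨a, b, ha, hb, hab⟩ := IsCutVertex_exists_sep hu ⟨v, huv.symm⟩
  obtain ⟨s, hsu, hsv, hs⟩ := choose_sep hab ha hb huv.symm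
  obtain ⟨a', b', ha', hb', hab'⟩ := IsCutVertex_exists_sep hv ⟨u, huv⟩
  obtain ⟨t, htv, htu, ht⟩ := choose_sep hab' ha' hb' huv
  have key1 : Avoid G v s u := by
    obtain ⟨q0⟩ := hconn s v
    obtain ⟨q, hq⟩ : ∃ q : G.Walk s v, q.IsPath := ⟨q0.toPath.1, q0.toPath.2⟩
    have huq : u ∈ q.support := by by_contra h; exact hs ⟨q, h⟩
    exact avoid_of_path_through q hq huq huv
  have key2 : Avoid G u t v := by
    obtain ⟨q0⟩ := hconn t u
    obtain ⟨q, hq⟩ : ∃ q : G.Walk t u, q.IsPath := ⟨q0.toPath.1, q0.toPath.2⟩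
    have hvq : v ∈ q.support := by by_contra h; exact ht ⟨q, h⟩
    exact avoid_of_path_through q hq hvq huv.symm
  have hst : s ≠ t := by rintro rfl; exact ht key1
  refine ⟨s, t, hst, hsu, hsv, htu, htv, fun p => ⟨?_, ?_⟩⟩
  · by_contra h
    exact hs (Avoid.trans ⟨p, h⟩ key2)
  · by_contra h
    exact ht (Avoid.trans (Avoid.symm ⟨p, h⟩) key1)

lemma sepVE_aux (hconn : G.Connected) {u a : V}
    (hu : ¬ (G.induce ({u}ᶜ : Set V)).Connected) (hau : G.Adj a u)
    (hnf : ¬ AvoidE G s(a, u) a u) :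
    ∃ s t : V, s ≠ t ∧ s ≠ u ∧ t ≠ u ∧
      ∀ p : G.Walk s t, u ∈ p.support ∧ s(a, u) ∈ p.edges := by
  obtain ⟨p0, q0, hp0, hq0, hpq⟩ := IsCutVertex_exists_sep hu ⟨a, hau.ne⟩
  obtain ⟨s, hsu, hsa, hs⟩ := choose_sep hpq hp0 hq0 hau.ne
  refine ⟨s, a, hsa, hsu, hau.ne, fun p => ?_⟩
  have hup : u ∈ p.support := by by_contra h; exact hs ⟨p, h⟩
  refine ⟨hup, ?_⟩
  have hdrop : s(a, u) ∈ (p.dropUntil u hup).edges := by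
    by_contra h
    exact hnf (AvoidE.symm ⟨p.dropUntil u hup, h⟩)
  exact Walk.edges_dropUntil_subset p hup hdrop

lemma sepVE (hconn : G.Connected) {u a b : V}
    (hu : ¬ (G.induce ({u}ᶜ : Set V)).Connected) (hab : G.Adj a b)
    (hnf : ¬ AvoidE G s(a, b) a b) :
    ∃ s t : V, s ≠ t ∧ s ≠ u ∧ t ≠ u ∧
      ∀ p : G.Walk s t, u ∈ p.support ∧ s(a, b) ∈ p.edges := by
  by_cases hua : u = a
  · subst hua
    have hnf' : ¬ AvoidE G s(b, u) b u := fun h => by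
      have h2 := AvoidE.symm h
      rw [Sym2.eq_swap] at h2
      exact hnf h2
    obtain ⟨s, t, h1, h2, h3, h4⟩ := sepVE_aux hconn hu hab.symm hnf'
    refine ⟨s, t, h1, h2, h3, fun p => ?_⟩
    rw [Sym2.eq_swap]
    exact h4 p
  by_cases hub : u = b
  · subst hub
    exact sepVE_aux hconn hu hab hnf
  · obtain ⟨p0, q0, hp0, hq0, hpq⟩ := IsCutVertex_exists_sep hu ⟨a, Ne.symm hua⟩
    obtain ⟨s, hsu, hsa, hs⟩ := choose_sep hpq hp0 hq0 (Ne.symm hua)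
    obtain ⟨t, hts, htab, ht⟩ := choose_sepE (y := s) hnf
    have htu : t ≠ u := by
      rcases htab with rfl | rfl
      · exact fun h => hua h.symm
      · exact fun h => hub h.symm
    refine ⟨s, t, Ne.symm hts, hsu, htu, fun p => ⟨?_, ?_⟩⟩
    · by_contra h
      have h1 : Avoid G u s t := ⟨p, h⟩
      have h2 : Avoid G u t a := by
        rcases htab with rfl | rfl
        · exact ⟨Walk.nil, by simp [hua]⟩
        · exact ⟨Walk.cons hab.symm Walk.nil, by simp [hua, hub]⟩
      exact hs (Avoid.trans h1 h2)
    · by_contra h; exact ht ⟨p, h⟩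

-- Internal vertex membership
lemma getLast_support {s t : V} (p : G.Walk s t) (h : p.support ≠ []) :
    p.support.getLast h = t := by
  induction p with
  | nil => rfl
  | cons ha q ih =>
    show (_ :: q.support).getLast _ = _
    rw [List.getLast_cons q.support_ne_nil]
    exact ih _

lemma getLast_support_tail {s t : V} (p : G.Walk s t) (h : p.support.tail ≠ []) :
    p.support.tail.getLast h = t := by
  cases p with
  | nil => simp at h
  | cons ha q => exact getLast_support q h

lemma mem_internal {s t c : V} (p : G.Walk s t) (hc : c ∈ p.support)
    (hcs : c ≠ s) (hct : c ≠ t) : c ∈ p.support.tail.dropLast := by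
  have h1 : c ∈ p.support.tail := by
    rw [Walk.support_eq_cons, List.mem_cons] at hc
    rcases hc with h | h
    · exact absurd h hcs
    · exact h
  have htail : p.support.tail ≠ [] := List.ne_nil_of_mem h1
  have hlast : p.support.tail.getLast htail = t := getLast_support_tail p htail
  have hsplit := List.dropLast_append_getLast htail
  rw [← hsplit, List.mem_append, List.mem_singleton] at h1
  rcases h1 with h | h
  · exact h
  · rw [hlast] at h; exact absurd h hct

def IsTRCColoring' {G : SimpleGraph V} {k : ℕ}
    (cE : Sym2 V → Fin k) (cV : V → Fin k) : Prop :=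
  ∀ u v : V, u ≠ v → ∃ p : G.Walk u v, p.IsPath ∧
    (p.edges.map cE ++ p.support.tail.dropLast.map cV).Nodup

section color
variable {k : ℕ} {cE : Sym2 V → Fin k} {cV : V → Fin k}

lemma cv_ne (hconn : G.Connected) (hc : IsTRCColoring' (G := G) cE cV) {u v : V}
    (hu : ¬ (G.induce ({u}ᶜ : Set V)).Connected)
    (hv : ¬ (G.induce ({v}ᶜ : Set V)).Connected) (huv : u ≠ v) : cV u ≠ cV v := by
  obtain ⟨s, t, hst, hsu, hsv, htu, htv, hkey⟩ := sepVV hconn hu hv huv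
  obtain ⟨p, hp, hnd⟩ := hc s t hst
  obtain ⟨hus, hvs⟩ := hkey p
  have hu' : u ∈ p.support.tail.dropLast := mem_internal p hus (Ne.symm hsu) (Ne.symm htu)
  have hv' : v ∈ p.support.tail.dropLast := mem_internal p hvs (Ne.symm hsv) (Ne.symm htv)
  intro h
  exact huv (List.inj_on_of_nodup_map hnd.of_append_right hu' hv' h)

lemma ce_ne (hconn : G.Connected) (hc : IsTRCColoring' (G := G) cE cV) {e f : Sym2 V}
    (he : G.IsBridge e) (hf : G.IsBridge f) (hef : e ≠ f) : cE e ≠ cE f := by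
  induction e using Sym2.ind with | _ x y => ?_
  induction f using Sym2.ind with | _ a b => ?_
  have hxy : G.Adj x y := (IsBridge.reachable_iff_adj he).mp (hconn x y)
  have hab : G.Adj a b := (IsBridge.reachable_iff_adj hf).mp (hconn a b)
  obtain ⟨s, t, hst, hkey⟩ :=
    sepEE hconn hxy hab hef (IsBridge_not_avoidE he) (IsBridge_not_avoidE hf)
  obtain ⟨p, hp, hnd⟩ := hc s t hst
  obtain ⟨he', hf'⟩ := hkey p
  intro h
  exact hef (List.inj_on_of_nodup_map hnd.of_append_left he' hf' h)

lemma cv_ce_ne (hconn : G.Connected) (hc : IsTRCColoring' (G := G) cE cV) {u : V}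
    {f : Sym2 V} (hu : ¬ (G.induce ({u}ᶜ : Set V)).Connected) (hf : G.IsBridge f) :
    cV u ≠ cE f := by
  induction f using Sym2.ind with | _ a b => ?_
  have hab : G.Adj a b := (IsBridge.reachable_iff_adj hf).mp (hconn a b)
  obtain ⟨s, t, hst, hsu, htu, hkey⟩ := sepVE hconn hu hab (IsBridge_not_avoidE hf)
  obtain ⟨p, hp, hnd⟩ := hc s t hst
  obtain ⟨hus, hfe⟩ := hkey p
  have hu' : u ∈ p.support.tail.dropLast := mem_internal p hus (Ne.symm hsu) (Ne.symm htu)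
  intro h
  exact (List.disjoint_of_nodup_append hnd) (List.mem_map_of_mem (f := cE) hfe)
    (h ▸ List.mem_map_of_mem (f := cV) hu')

end color

lemma exists_coloring [Fintype V] (hconn : G.Connected) :
    ∃ (k : ℕ) (cE : Sym2 V → Fin k) (cV : V → Fin k), IsTRCColoring' (G := G) cE cV := by
  classical
  set n1 := Fintype.card (Sym2 V) with hn1
  set n2 := Fintype.card V with hn2
  refine ⟨n1 + n2, fun e => Fin.castAdd n2 ((Fintype.equivFin (Sym2 V)) e),
    fun v => Fin.natAdd n1 ((Fintype.equivFin V) v), ?_⟩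
  intro u v huv
  obtain ⟨q0⟩ := hconn u v
  refine ⟨q0.toPath.1, q0.toPath.2, ?_⟩
  rw [List.nodup_append]
  refine ⟨?_, ?_, ?_⟩
  · refine (q0.toPath.2.edges_nodup).map ?_
    intro a b hab
    have := congrArg Fin.val hab
    simp only [Fin.coe_castAdd] at this
    exact (Fintype.equivFin (Sym2 V)).injective (Fin.val_injective this)
  · have hs : q0.toPath.1.support.Nodup := q0.toPath.2.support_nodup
    refine (hs.sublist ((List.dropLast_sublist _).trans (List.tail_sublist _))).map ?_
    intro a b hab
    have := congrArg Fin.val hab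
    simp only [Fin.coe_natAdd] at this
    exact (Fintype.equivFin V).injective (Fin.val_injective (by omega))
  · intro x hx y hy hxy; subst hxy
    simp only [List.mem_map] at hx hy
    obtain ⟨e, -, rfl⟩ := hx
    obtain ⟨w, -, hw⟩ := hy
    have := congrArg Fin.val hw
    simp only [Fin.coe_natAdd, Fin.coe_castAdd] at this
    have h1 : ((Fintype.equivFin (Sym2 V)) e).val < n1 := Fin.is_lt _
    omega

end Helpers

theorem stmt_6 {V : Type*} [Fintype V] (G : SimpleGraph V)
    (hconn : G.Connected) :
    ({v : V | IsCutVertex G v}.ncard + {e : Sym2 V | G.IsBridge e}.ncard) ≤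
      trc G := by
  classical
  obtain ⟨k0, cE0, cV0, hc0⟩ := exists_coloring hconn
  refine le_csInf ⟨k0, cE0, cV0, hc0⟩ ?_
  rintro k ⟨cE, cV, hc⟩
  have hc' : IsTRCColoring' (G := G) cE cV := hc
  have hfinV : {v : V | IsCutVertex G v}.Finite := Set.toFinite _
  have hfinE : {e : Sym2 V | G.IsBridge e}.Finite := Set.toFinite _
  rw [Set.ncard_eq_toFinset_card _ hfinV, Set.ncard_eq_toFinset_card _ hfinE]
  set A := hfinV.toFinset with hA
  set B := hfinE.toFinset with hB
  have hmemA : ∀ x, x ∈ A → IsCutVertex G x := fun x hx => by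
    rw [hA, Set.Finite.mem_toFinset] at hx; exact hx
  have hmemB : ∀ e, e ∈ B → G.IsBridge e := fun e he => by
    rw [hB, Set.Finite.mem_toFinset] at he; exact he
  have h1 : (A.image cV).card = A.card := by
    refine Finset.card_image_of_injOn ?_
    intro u hu v hv h
    by_contra hne
    exact cv_ne hconn hc' (hmemA u hu).2 (hmemA v hv).2 hne h
  have h2 : (B.image cE).card = B.card := by
    refine Finset.card_image_of_injOn ?_
    intro e he f hf h
    by_contra hne
    exact ce_ne hconn hc' (hmemB e he) (hmemB f hf) hne h
  have hdisj : Disjoint (A.image cV) (B.image cE) := by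
    rw [Finset.disjoint_left]
    intro x hx hy
    obtain ⟨u, hu, rfl⟩ := Finset.mem_image.mp hx
    obtain ⟨e, he, heq⟩ := Finset.mem_image.mp hy
    exact cv_ce_ne hconn hc' (hmemA u hu).2 (hmemB e he) heq.symm
  calc A.card + B.card = (A.image cV).card + (B.image cE).card := by rw [h1, h2]
    _ = ((A.image cV) ∪ (B.image cE)).card := (Finset.card_union_of_disjoint hdisj).symm
    _ ≤ (Finset.univ : Finset (Fin k)).card := Finset.card_le_univ _
    _ = k := by simp
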